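/- Let F be a weakly convex sparseness measure with parameter ρ ≤ 0 and α = lim_{t→0⁺} F(t)/t. Then for every t ∈ ℝ, F(t) − α·|t| − ρ·t² ≥ 0, i.e. F(t) ≥ α|t| + ρt². -/

import Mathlib

open Filter Set

/-- Weak convexity on `[0,∞)` with parameter `ρ`. -/
def WeaklyConvexOnNonneg (F : ℝ → ℝ) (ρ : ℝ) : Prop :=
  ∀ t₁ t₂ : ℝ, 0 ≤ t₁ → 0 ≤ t₂ → ∀ l : ℝ, 0 ≤ l → l ≤ 1 →
    F (l * t₁ + (1 - l) * t₂) ≤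
      l * F t₁ + (1 - l) * F t₂ - ρ * l * (1 - l) * (t₁ - t₂) ^ 2

/-- `F` is a weakly convex sparseness measure with weak-convexity parameter `ρ ≤ 0`. -/
structure IsWCSM (F : ℝ → ℝ) (ρ : ℝ) : Prop where
  zero : F 0 = 0
  even : ∀ t, F (-t) = F t
  nontrivial : ∃ t, F t ≠ 0
  mono : ∀ s t : ℝ, 0 ≤ s → s ≤ t → F s ≤ F t
  ratio_anti : ∀ s t : ℝ, 0 < s → s ≤ t → F t / t ≤ F s / s
  rho_nonpos : ρ ≤ 0
  wconv : WeaklyConvexOnNonneg F ρ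

/-- `α = lim_{t→0⁺} F(t)/t`, finite and positive, with `F(t) ≤ α|t|` for all `t`. -/
def IsAlpha (F : ℝ → ℝ) (α : ℝ) : Prop :=
  0 < α ∧ Tendsto (fun t => F t / t) (nhdsWithin 0 (Set.Ioi 0)) (nhds α) ∧
    ∀ t : ℝ, F t ≤ α * |t|

/-- The generalized gradient set `∂F(t)`; by convention `∂F(0) = {0}`. -/
noncomputable def genGrad (F : ℝ → ℝ) (t : ℝ) : Set ℝ :=
  if t = 0 then {0}
  else {f : ℝ | ∀ ν : ℝ,
    ν * f ≤ Filter.limsup (fun θ => (F (t + θ * ν) - F t) / θ) (nhdsWithin 0 (Set.Ioi 0))}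

/-- Euclidean (`ℓ2`) norm of a vector. -/
noncomputable def l2 {n : ℕ} (x : Fin n → ℝ) : ℝ := Real.sqrt (∑ i, (x i) ^ 2)

/-- `ℓ1` norm of a vector. -/
def l1 {n : ℕ} (x : Fin n → ℝ) : ℝ := ∑ i, |x i|

/-- `ℓ0` "norm": number of nonzero entries. -/
noncomputable def l0 {n : ℕ} (x : Fin n → ℝ) : ℕ :=
  (Finset.univ.filter (fun i => x i ≠ 0)).card

/-- `z_S`: the vector equal to `z` on `S` and zero elsewhere. -/
def restr {n : ℕ} (x : Fin n → ℝ) (S : Finset (Fin n)) : Fin n → ℝ :=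
  fun i => if i ∈ S then x i else 0

/-- `γ` is a null-space-constant bound for `(J, A, K)`. -/
def NSCBound {M N : ℕ} (J : (Fin N → ℝ) → ℝ) (A : Matrix (Fin M) (Fin N) ℝ)
    (K : ℕ) (γ : ℝ) : Prop :=
  ∀ z : Fin N → ℝ, A.mulVec z = 0 → ∀ S : Finset (Fin N), S.card ≤ K →
    J (restr z S) ≤ γ * J (restr z Sᶜ)

/-- Spectral norm (`ℓ2`-operator norm) of a matrix. -/
noncomputable def opNorm2 {m n : ℕ} (A : Matrix (Fin m) (Fin n) ℝ) : ℝ :=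
  sSup {c : ℝ | ∃ v : Fin n → ℝ, l2 v ≤ 1 ∧ c = l2 (A.mulVec v)}

/-- `F(t) ≥ α|t| + ρt²` for every `t`. -/
theorem stmt8 (F : ℝ → ℝ) (ρ α : ℝ) (hF : IsWCSM F ρ) (hα : IsAlpha F α) :
    ∀ t : ℝ, 0 ≤ F t - α * |t| - ρ * t ^ 2 := by
  -- key claim for positive t
  have key : ∀ t : ℝ, 0 < t → α + ρ * t ≤ F t / t := by
    intro t ht
    have hlim : Tendsto (fun s => F s / s + ρ * (t - s))
        (nhdsWithin 0 (Set.Ioi 0)) (nhds (α + ρ * t)) := by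
      have h2 : Tendsto (fun s : ℝ => ρ * (t - s)) (nhdsWithin 0 (Set.Ioi 0))
          (nhds (ρ * t)) := by
        have : Tendsto (fun s : ℝ => ρ * (t - s)) (nhds 0) (nhds (ρ * (t - 0))) := by
          exact (tendsto_const_nhds.sub tendsto_id).const_mul ρ
        simpa using this.mono_left nhdsWithin_le_nhds
      exact hα.2.1.add h2
    have hev : ∀ᶠ s in nhdsWithin 0 (Set.Ioi 0),
        F s / s + ρ * (t - s) ≤ F t / t := by
      have h1 : ∀ᶠ s in nhdsWithin 0 (Set.Ioi 0), s ∈ Set.Ioi (0:ℝ) :=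
        eventually_mem_nhdsWithin
      have h2 : ∀ᶠ s in nhdsWithin 0 (Set.Ioi 0), s < t :=
        eventually_nhdsWithin_of_eventually_nhds (eventually_lt_nhds ht)
      filter_upwards [h1, h2] with s hs hst
      have hs0 : (0:ℝ) < s := hs
      have hl0 : 0 ≤ s / t := by positivity
      have hl1 : s / t ≤ 1 := by
        rw [div_le_one ht]; exact hst.le
      have hw := hF.wconv t 0 ht.le le_rfl (s / t) hl0 hl1
      have hst' : s / t * t + (1 - s / t) * 0 = s := by
        field_simp; ring
      rw [hst', hF.zero] at hw
      -- hw : F s ≤ s / t * F t + (1 - s/t) * 0 - ρ * (s/t) * (1-s/t) * (t-0)^2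
      have hw' : F s ≤ (F t / t - ρ * (t - s)) * s := by
        have e : s / t * F t + (1 - s / t) * 0 - ρ * (s / t) * (1 - s / t) * (t - 0) ^ 2
            = (F t / t - ρ * (t - s)) * s := by
          field_simp; ring
        rw [e] at hw; exact hw
      have := (div_le_iff₀ hs0).2 hw'
      linarith
    exact le_of_tendsto hlim hev
  intro t
  rcases lt_trichotomy t 0 with ht | ht | ht
  · have h := key (-t) (by linarith)
    have habs : |t| = -t := abs_of_neg ht
    have hpos : (0:ℝ) < -t := by linarith
    have hFt : F (-t) = F t := hF.even t
    rw [hFt] at h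
    have h2 := (le_div_iff₀ hpos).1 h
    rw [habs]; nlinarith [h2]
  · simp [ht, hF.zero]
  · have h := key t ht
    have h2 := (le_div_iff₀ ht).1 h
    have habs : |t| = t := abs_of_pos ht
    rw [habs]; nlinarith [h2]
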